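/- arXiv:1805.01648 — 3 statements merged into one kernel-verified Lean document; each statement's English description precedes it below -/
import Mathlib

section
/- For all r ≥ 0, (1/2)·exp(-α R²)·r ≤ (1/2)·Ψ(r) ≤ f(r) ≤ Ψ(r) ≤ r, where f(r) = ∫₀^r ψ(s)g(s) ds. -/
open Real MeasureTheory intervalIntegral

/-- The auxiliary function ψ(r) = exp(-α·min{r², R²}). -/
noncomputable def psiE (α R r : ℝ) : ℝ := Real.exp (-(α * min (r ^ 2) (R ^ 2)))

/-- Ψ(r) = ∫₀ʳ ψ(s) ds. -/
noncomputable def PsiE (α R r : ℝ) : ℝ := ∫ s in (0:ℝ)..r, psiE α R s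

/-- g(r) = 1 - (1/2)·(∫₀^{min{r,R}} Ψ/ψ)/(∫₀^R Ψ/ψ). -/
noncomputable def gEb (α R r : ℝ) : ℝ :=
  1 - (1 / 2) * (∫ s in (0:ℝ)..(min r R), PsiE α R s / psiE α R s) /
      (∫ s in (0:ℝ)..R, PsiE α R s / psiE α R s)

/-- The Eberle distance function f(r) = ∫₀ʳ ψ(s)·g(s) ds. -/
noncomputable def fEb (α R r : ℝ) : ℝ := ∫ s in (0:ℝ)..r, psiE α R s * gEb α R s

section aux

variable {α R : ℝ}

lemma continuous_psiE : Continuous (psiE α R) := by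
  unfold psiE
  exact (Continuous.mul continuous_const
    ((continuous_pow 2).min continuous_const)).neg.rexp

lemma psiE_pos (r : ℝ) : 0 < psiE α R r := Real.exp_pos _

lemma psiE_le_one (hα : 0 < α) (r : ℝ) : psiE α R r ≤ 1 := by
  unfold psiE
  rw [← Real.exp_zero]
  apply Real.exp_le_exp.2
  have h0 : (0:ℝ) ≤ min (r ^ 2) (R ^ 2) := le_min (sq_nonneg r) (sq_nonneg R)
  nlinarith

lemma exp_le_psiE (hα : 0 < α) (r : ℝ) : Real.exp (-(α * R ^ 2)) ≤ psiE α R r := by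
  unfold psiE
  apply Real.exp_le_exp.2
  have h : min (r ^ 2) (R ^ 2) ≤ R ^ 2 := min_le_right _ _
  nlinarith

lemma continuous_PsiE : Continuous (PsiE α R) :=
  intervalIntegral.continuous_primitive
    (fun a b => (continuous_psiE).intervalIntegrable a b) 0

lemma PsiE_nonneg {r : ℝ} (hr : 0 ≤ r) : 0 ≤ PsiE α R r :=
  intervalIntegral.integral_nonneg hr (fun s _ => (psiE_pos s).le)

lemma PsiE_pos {r : ℝ} (hr : 0 < r) : 0 < PsiE α R r :=
  intervalIntegral.intervalIntegral_pos_of_pos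
    ((continuous_psiE).intervalIntegrable 0 r) (fun s => psiE_pos s) hr

lemma continuous_ratio : Continuous (fun s => PsiE α R s / psiE α R s) :=
  continuous_PsiE.div continuous_psiE (fun s => (psiE_pos s).ne')

lemma ratio_nonneg {s : ℝ} (hs : 0 ≤ s) : 0 ≤ PsiE α R s / psiE α R s :=
  div_nonneg (PsiE_nonneg hs) (psiE_pos s).le

lemma den_pos (hR : 0 < R) : 0 < ∫ s in (0:ℝ)..R, PsiE α R s / psiE α R s := by
  apply intervalIntegral.intervalIntegral_pos_of_pos_on
    (continuous_ratio.intervalIntegrable 0 R)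
    (fun s hs => div_pos (PsiE_pos hs.1) (psiE_pos s)) hR

lemma num_nonneg {r : ℝ} (hr : 0 ≤ r) (hR : 0 ≤ R) :
    0 ≤ ∫ s in (0:ℝ)..(min r R), PsiE α R s / psiE α R s :=
  intervalIntegral.integral_nonneg (le_min hr hR)
    (fun s hs => ratio_nonneg hs.1)

lemma num_le_den {r : ℝ} (hr : 0 ≤ r) (hR : 0 ≤ R) :
    (∫ s in (0:ℝ)..(min r R), PsiE α R s / psiE α R s) ≤
      ∫ s in (0:ℝ)..R, PsiE α R s / psiE α R s := by
  apply intervalIntegral.integral_mono_interval (le_refl (0:ℝ)) (le_min hr hR)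
    (min_le_right r R)
  · filter_upwards [ae_restrict_mem measurableSet_Ioc] with s hs
    simpa using ratio_nonneg (α := α) (R := R) hs.1.le
  · exact continuous_ratio.intervalIntegrable 0 R

lemma gEb_le_one (hα : 0 < α) (hR : 0 < R) {r : ℝ} (hr : 0 ≤ r) : gEb α R r ≤ 1 := by
  unfold gEb
  have h1 := num_nonneg (α := α) hr hR.le
  have h2 := den_pos (α := α) hR
  have : 0 ≤ (1 / 2) * (∫ s in (0:ℝ)..(min r R), PsiE α R s / psiE α R s) /
      (∫ s in (0:ℝ)..R, PsiE α R s / psiE α R s) := by positivity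
  linarith

lemma half_le_gEb (hα : 0 < α) (hR : 0 < R) {r : ℝ} (hr : 0 ≤ r) :
    1 / 2 ≤ gEb α R r := by
  unfold gEb
  have h2 := den_pos (α := α) hR
  have h3 := num_le_den (α := α) hr hR.le
  have : (1 / 2) * (∫ s in (0:ℝ)..(min r R), PsiE α R s / psiE α R s) /
      (∫ s in (0:ℝ)..R, PsiE α R s / psiE α R s) ≤ 1 / 2 := by
    rw [div_le_iff₀ h2]
    linarith
  linarith

lemma continuous_gEb : Continuous (gEb α R) := by
  unfold gEb
  have h : Continuous (fun r : ℝ => ∫ s in (0:ℝ)..(min r R), PsiE α R s / psiE α R s) :=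
    (intervalIntegral.continuous_primitive
      (fun a b => continuous_ratio.intervalIntegrable a b) 0).comp
      (continuous_id.min continuous_const)
  continuity

end aux

/-- (1/2)·exp(-αR²)·r ≤ (1/2)·Ψ(r) ≤ f(r) ≤ Ψ(r) ≤ r for all r ≥ 0. -/
theorem f_sandwich (α R : ℝ) (hα : 0 < α) (hR : 0 < R) :
    ∀ r : ℝ, 0 ≤ r →
      (1 / 2) * Real.exp (-(α * R ^ 2)) * r ≤ (1 / 2) * PsiE α R r ∧
      (1 / 2) * PsiE α R r ≤ fEb α R r ∧
      fEb α R r ≤ PsiE α R r ∧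
      PsiE α R r ≤ r := by
  intro r hr
  have hint_psi : IntervalIntegrable (psiE α R) volume 0 r :=
    continuous_psiE.intervalIntegrable 0 r
  have hint_fg : IntervalIntegrable (fun s => psiE α R s * gEb α R s) volume 0 r :=
    (continuous_psiE.mul continuous_gEb).intervalIntegrable 0 r
  refine ⟨?_, ?_, ?_, ?_⟩
  · -- (1/2)·exp·r ≤ (1/2)·Ψ r
    have : Real.exp (-(α * R ^ 2)) * r ≤ PsiE α R r := by
      have := intervalIntegral.integral_mono_on hr
        ((continuous_const : Continuous fun _ : ℝ => Real.exp (-(α * R ^ 2))).intervalIntegrable 0 r)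
        hint_psi (fun s _ => exp_le_psiE hα s)
      simpa [mul_comm, PsiE] using this
    linarith
  · -- (1/2)Ψ ≤ f
    have : (∫ s in (0:ℝ)..r, (1/2) * psiE α R s) ≤ fEb α R r := by
      apply intervalIntegral.integral_mono_on hr
        (hint_psi.const_mul _) hint_fg
      intro s hs
      have hg := half_le_gEb hα hR hs.1
      have hp := (psiE_pos (α := α) (R := R) s).le
      nlinarith
    rw [intervalIntegral.integral_const_mul] at this
    exact this
  · -- f ≤ Ψ
    apply intervalIntegral.integral_mono_on hr hint_fg hint_psi
    intro s hs
    have hg := gEb_le_one hα hR hs.1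
    have hp := (psiE_pos (α := α) (R := R) s).le
    nlinarith
  · -- Ψ ≤ r
    have := intervalIntegral.integral_mono_on hr hint_psi
      ((continuous_const : Continuous fun _ : ℝ => (1:ℝ)).intervalIntegrable 0 r)
      (fun s _ => psiE_le_one hα s)
    simpa [PsiE] using this
end

section
/- Let z, w ∈ ℝᵈ, let U : ℝᵈ → ℝ have L-Lipschitz gradient and satisfy ⟨∇U(x) - ∇U(y), x - y⟩ ≥ m‖x-y‖² whenever ‖x-y‖ > R, and write κ = L/m ≥ 1, c = 1000, ∇ = ∇U(x) - ∇U(y) with z = x - y. If ‖z‖² + ‖z+w‖² ≥ 2.2 R², then ⟨(z, z+w), (w, -w - (1/(cκL))∇)⟩ ≤ -(1/(3(cκ)²))·(‖z‖² + ‖z+w‖²), where the inner product on ℝ^{2d} is the sum of the coordinate-wise inner products. -/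
open Real InnerProductSpace

set_option maxHeartbeats 1600000 in
/-- Scalar inequality for the far case (`R < ‖z‖`). -/
theorem sync_drift_scalar_far (L m a b n : ℝ) (hm : 0 < m) (hLm : m ≤ L) (ha : 0 ≤ a)
    (hb : 0 ≤ b) (hn0 : 0 ≤ n) (hn : n ≤ a + b) :
    -(b^2) - m/(1000*L^2) * (m*a^2 - L*a*b) ≤ -(m^2/(3000000*L^2)) * (a^2 + n^2) := by
  have hL : 0 < L := hm.trans_le hLm
  have hn2 : n^2 ≤ (a+b)^2 := by nlinarith
  have key : -(m^2/(3000000*L^2)) * (a^2 + n^2) - (-(b^2) - m/(1000*L^2) * (m*a^2 - L*a*b))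
      = (3000000*L^2*b^2 + 3000*m*(m*a^2 - L*a*b) - m^2*(a^2+n^2)) / (3000000*L^2) := by
    field_simp; ring
  have hnum : 0 ≤ 3000000*L^2*b^2 + 3000*m*(m*a^2 - L*a*b) - m^2*(a^2+n^2) := by
    nlinarith [sq_nonneg (1000*L*b - m*a), sq_nonneg (m*(a-b)), mul_pos hm hm,
      mul_le_mul hLm hLm hm.le hL.le, sq_nonneg (a+b), sq_nonneg b,
      mul_nonneg (mul_nonneg hm.le hm.le) (sub_nonneg.2 hn2)]
  have h2 := div_nonneg hnum (by positivity : (0:ℝ) ≤ 3000000*L^2)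
  linarith [key ▸ h2]

set_option maxHeartbeats 1600000 in
/-- Scalar inequality for the near case (`‖z‖ ≤ R`). -/
theorem sync_drift_scalar_near (L m R a b n : ℝ) (hm : 0 < m) (hLm : m ≤ L) (hR : 0 < R)
    (ha : 0 ≤ a) (hb : 0 ≤ b) (hn0 : 0 ≤ n) (hn : n ≤ a + b) (haR : a ≤ R)
    (hfar : 2.2 * R^2 ≤ a^2 + n^2) :
    -(b^2) - m/(1000*L^2) * (-(L*a^2) - L*a*b) ≤ -(m^2/(3000000*L^2)) * (a^2 + n^2) := by
  have hL : 0 < L := hm.trans_le hLm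
  have hn2 : n^2 ≤ (a+b)^2 := by nlinarith
  have hab2 : (a+b)^2 ≤ (R+b)^2 := by nlinarith
  have hQ : R^2 ≤ 5*b^2 + 10*b*R := by nlinarith
  have hb11 : R ≤ 11*b := by nlinarith [mul_nonneg hb hR.le]
  have ha11 : a ≤ 11*b := haR.trans hb11
  have hnb : n ≤ 22*b := by linarith
  have key : -(m^2/(3000000*L^2)) * (a^2 + n^2) - (-(b^2) - m/(1000*L^2) * (-(L*a^2) - L*a*b))
      = (3000000*L^2*b^2 - 3000*m*L*(a^2 + a*b) - m^2*(a^2+n^2)) / (3000000*L^2) := by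
    field_simp; ring
  have hnum : 0 ≤ 3000000*L^2*b^2 - 3000*m*L*(a^2 + a*b) - m^2*(a^2+n^2) := by
    have hmL2 : m*L ≤ L^2 := by nlinarith
    have hm2L2 : m^2 ≤ L^2 := by nlinarith
    have h1 : 0 ≤ 3000000*b^2 - 3000*(a^2 + a*b) - (a^2+n^2) := by
      nlinarith [mul_le_mul ha11 ha11 ha (by linarith : (0:ℝ) ≤ 11*b),
        mul_le_mul hnb hnb hn0 (by linarith : (0:ℝ) ≤ 22*b),
        mul_le_mul_of_nonneg_right ha11 hb]
    nlinarith [mul_nonneg (sq_nonneg L) h1, mul_nonneg (mul_nonneg ha hb) (sub_nonneg.2 hmL2),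
      mul_nonneg (sq_nonneg a) (sub_nonneg.2 hmL2),
      mul_nonneg (add_nonneg (sq_nonneg a) (sq_nonneg n)) (sub_nonneg.2 hm2L2)]
  have h2 := div_nonneg hnum (by positivity : (0:ℝ) ≤ 3000000*L^2)
  linarith [key ▸ h2]

/-- Key drift inequality for synchronous coupling of underdamped Langevin:
if ‖z‖² + ‖z+w‖² ≥ 2.2R², then
⟨(z, z+w), (w, -w - (1/(cκL))∇)⟩ ≤ -(1/(3(cκ)²))(‖z‖² + ‖z+w‖²), with c = 1000, κ = L/m. -/
theorem sync_drift_contraction {d : ℕ} (L m R : ℝ) (hm : 0 < m) (hLm : m ≤ L) (hR : 0 < R)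
    (U : EuclideanSpace ℝ (Fin d) → ℝ) (hU : ContDiff ℝ 1 U)
    (hlip : ∀ a b : EuclideanSpace ℝ (Fin d),
      ‖gradient U a - gradient U b‖ ≤ L * ‖a - b‖)
    (hsc : ∀ a b : EuclideanSpace ℝ (Fin d), R < ‖a - b‖ →
      m * ‖a - b‖ ^ 2 ≤ ⟪gradient U a - gradient U b, a - b⟫_ℝ)
    (x y w : EuclideanSpace ℝ (Fin d))
    (hfar : 2.2 * R ^ 2 ≤ ‖x - y‖ ^ 2 + ‖(x - y) + w‖ ^ 2) :
    ⟪x - y, w⟫_ℝ +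
      ⟪(x - y) + w, -w - (1 / (1000 * (L / m) * L)) • (gradient U x - gradient U y)⟫_ℝ ≤
      -(1 / (3 * (1000 * (L / m)) ^ 2)) * (‖x - y‖ ^ 2 + ‖(x - y) + w‖ ^ 2) := by
  have hL : 0 < L := hm.trans_le hLm
  set z := x - y with hz
  set g := gradient U x - gradient U y with hg
  have hs : 1 / (1000 * (L / m) * L) = m / (1000 * L^2) := by
    rw [div_eq_div_iff (by positivity) (by positivity)]; field_simp
  have hδ : 1 / (3 * (1000 * (L / m)) ^ 2) = m^2 / (3000000 * L^2) := by
    rw [div_eq_div_iff (by positivity) (by positivity)]; field_simp; ring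
  have key : ⟪z, w⟫_ℝ + ⟪z + w, -w - (1 / (1000 * (L/m) * L)) • g⟫_ℝ
      = -(‖w‖^2) - (1 / (1000 * (L/m) * L)) * (⟪z, g⟫_ℝ + ⟪w, g⟫_ℝ) := by
    simp only [inner_sub_right, inner_neg_right, real_inner_smul_right, inner_add_left,
      real_inner_self_eq_norm_sq]
    ring
  rw [key, hs, hδ]
  have hgn : ‖g‖ ≤ L * ‖z‖ := hlip x y
  have hwg : -(‖w‖ * (L * ‖z‖)) ≤ ⟪w, g⟫_ℝ := by
    have h1 := abs_real_inner_le_norm w g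
    have h2 : ‖w‖ * ‖g‖ ≤ ‖w‖ * (L * ‖z‖) := mul_le_mul_of_nonneg_left hgn (norm_nonneg w)
    have := neg_abs_le (⟪w, g⟫_ℝ)
    linarith
  have hcoef : 0 < m / (1000 * L^2) := by positivity
  have hn : ‖z + w‖ ≤ ‖z‖ + ‖w‖ := norm_add_le z w
  rcases le_or_gt ‖z‖ R with hcase | hcase
  · -- near case
    have hzg : -(L * ‖z‖^2) ≤ ⟪z, g⟫_ℝ := by
      have h1 := abs_real_inner_le_norm z g
      have h2 : ‖z‖ * ‖g‖ ≤ ‖z‖ * (L * ‖z‖) := mul_le_mul_of_nonneg_left hgn (norm_nonneg z)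
      have := neg_abs_le (⟪z, g⟫_ℝ)
      nlinarith
    have hI : -(L*‖z‖^2) - L*‖z‖*‖w‖ ≤ ⟪z, g⟫_ℝ + ⟪w, g⟫_ℝ := by
      have : -(‖w‖ * (L * ‖z‖)) = -(L*‖z‖*‖w‖) := by ring
      linarith [this ▸ hwg]
    calc -(‖w‖^2) - m / (1000*L^2) * (⟪z, g⟫_ℝ + ⟪w, g⟫_ℝ)
        ≤ -(‖w‖^2) - m / (1000*L^2) * (-(L*‖z‖^2) - L*‖z‖*‖w‖) := by
          have := mul_le_mul_of_nonneg_left hI hcoef.le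
          linarith
      _ ≤ -(m^2 / (3000000*L^2)) * (‖z‖^2 + ‖z + w‖^2) :=
          sync_drift_scalar_near L m R ‖z‖ ‖w‖ ‖z + w‖ hm hLm hR (norm_nonneg z)
            (norm_nonneg w) (norm_nonneg _) hn hcase hfar
  · -- far case
    have hzg : m * ‖z‖^2 ≤ ⟪z, g⟫_ℝ := by
      have := hsc x y hcase
      rwa [real_inner_comm] at this
    have hI : m*‖z‖^2 - L*‖z‖*‖w‖ ≤ ⟪z, g⟫_ℝ + ⟪w, g⟫_ℝ := by
      have : -(‖w‖ * (L * ‖z‖)) = -(L*‖z‖*‖w‖) := by ring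
      linarith [this ▸ hwg]
    calc -(‖w‖^2) - m / (1000*L^2) * (⟪z, g⟫_ℝ + ⟪w, g⟫_ℝ)
        ≤ -(‖w‖^2) - m / (1000*L^2) * (m*‖z‖^2 - L*‖z‖*‖w‖) := by
          have := mul_le_mul_of_nonneg_left hI hcoef.le
          linarith
      _ ≤ -(m^2 / (3000000*L^2)) * (‖z‖^2 + ‖z + w‖^2) :=
          sync_drift_scalar_far L m ‖z‖ ‖w‖ ‖z + w‖ hm hLm (norm_nonneg z)
            (norm_nonneg w) (norm_nonneg _) hn
end

section
/- Let p* be a probability measure on ℝᵈ with density proportional to exp(-U(x)), where U is L-smooth, ∇U(0) = 0, and U is m-strongly convex outside a ball of radius R (i.e., ⟨∇U(x)-∇U(y), x-y⟩ ≥ m‖x-y‖² whenever ‖x-y‖ > R). Then the second moment of p* is bounded: E_{x∼p*}[‖x‖₂²] ≤ 2d/m + 18R². -/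
open Real MeasureTheory InnerProductSpace Filter Asymptotics

variable {d : ℕ}

local notation "E" => EuclideanSpace ℝ (Fin d)

lemma grad_inner (U : E → ℝ) (x v : E) :
    ⟪gradient U x, v⟫_ℝ = fderiv ℝ U x v := by
  rw [gradient]
  exact InnerProductSpace.toDual_symm_apply

lemma line_hasDerivAt (U : E → ℝ) (hU : ContDiff ℝ 1 U) (u : E) (t : ℝ) :
    HasDerivAt (fun s : ℝ => U (s • u)) (fderiv ℝ U (t • u) u) t := by
  have h1 : HasDerivAt (fun s : ℝ => s • u) u t := by
    simpa using (hasDerivAt_id t).smul_const u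
  exact ((hU.differentiable one_ne_zero (t • u)).hasFDerivAt).comp_hasDerivAt t h1

lemma line_deriv_cont (U : E → ℝ) (hU : ContDiff ℝ 1 U) (u : E) :
    Continuous (fun t : ℝ => fderiv ℝ U (t • u) u) := by
  have h1 : Continuous (fun t : ℝ => fderiv ℝ U (t • u)) :=
    (hU.continuous_fderiv one_ne_zero).comp (continuous_id.smul continuous_const)
  exact h1.clm_apply continuous_const

/-- FTC comparison along a ray. -/
lemma ray_lower (U : E → ℝ) (hU : ContDiff ℝ 1 U) (u : E) {a b : ℝ} (hab : a ≤ b)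
    (φ : ℝ → ℝ) (hφ : Continuous φ)
    (hle : ∀ t ∈ Set.Icc a b, φ t ≤ fderiv ℝ U (t • u) u) :
    U (a • u) + ∫ t in a..b, φ t ≤ U (b • u) := by
  have hftc : ∫ t in a..b, fderiv ℝ U (t • u) u = U (b • u) - U (a • u) := by
    apply intervalIntegral.integral_eq_sub_of_hasDerivAt
    · intro t ht
      exact line_hasDerivAt U hU u t
    · exact ((line_deriv_cont U hU u).intervalIntegrable a b)
  have hmono : ∫ t in a..b, φ t ≤ ∫ t in a..b, fderiv ℝ U (t • u) u := by
    apply intervalIntegral.integral_mono_on hab (hφ.intervalIntegrable a b)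
      ((line_deriv_cont U hU u).intervalIntegrable a b)
    exact hle
  linarith

lemma lip_lower (U : E → ℝ) (hU : ContDiff ℝ 1 U) {L : ℝ}
    (hlip : ∀ a b : E, ‖gradient U a - gradient U b‖ ≤ L * ‖a - b‖)
    (hgrad0 : gradient U 0 = 0) (x : E) :
    U 0 - L / 2 * ‖x‖ ^ 2 ≤ U x := by
  rcases eq_or_ne x 0 with rfl | hx
  · simp
  · set s := ‖x‖ with hs
    have hs0 : 0 < s := norm_pos_iff.2 hx
    set u : E := s⁻¹ • x with hu
    have hxu : x = s • u := by rw [hu, smul_inv_smul₀ hs0.ne']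
    have hnu : ‖u‖ = 1 := by rw [hu, norm_smul]; simp [abs_of_pos hs0, inv_mul_cancel₀ hs0.ne', ← hs]
    have key := ray_lower U hU u (le_of_lt hs0) (fun t => -(L * t))
      (by fun_prop) ?_
    · have hint : (∫ t in (0:ℝ)..s, -(L * t)) = -(L / 2 * s ^ 2) := by
        rw [intervalIntegral.integral_neg, intervalIntegral.integral_const_mul,
          integral_id]
        ring
      rw [hint] at key
      simpa [hxu] using key
    · intro t ht
      have h1 : ‖gradient U (t • u)‖ ≤ L * t := by
        have := hlip (t • u) 0
        simpa [hgrad0, norm_smul, hnu, abs_of_nonneg ht.1] using this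
      have h2 : -(L * t) ≤ ⟪gradient U (t • u), u⟫_ℝ := by
        have habs := abs_real_inner_le_norm (gradient U (t • u)) u
        rw [hnu, mul_one] at habs
        have := neg_abs_le ⟪gradient U (t • u), u⟫_ℝ
        linarith [abs_le.mp habs]
      rw [← grad_inner]
      exact h2

lemma sc_ray (U : E → ℝ) (hU : ContDiff ℝ 1 U) {m R : ℝ} (hm : 0 < m) (hR : 0 < R)
    (hsc : ∀ a b : E, R < ‖a - b‖ → m * ‖a - b‖ ^ 2 ≤ ⟪gradient U a - gradient U b, a - b⟫_ℝ)
    (hgrad0 : gradient U 0 = 0)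
    (u : E) (hnu : ‖u‖ = 1) {s : ℝ} (hs : 2 * R ≤ s) :
    U ((2*R) • u) + m / 2 * (s ^ 2 - (2*R) ^ 2) ≤ U (s • u) := by
  have h2R : (0:ℝ) < 2 * R := by linarith
  have key := ray_lower U hU u hs (fun t => m * t) (by fun_prop) ?_
  · have hint : (∫ t in (2*R)..s, m * t) = m / 2 * (s ^ 2 - (2*R) ^ 2) := by
      rw [intervalIntegral.integral_const_mul, integral_id]
      ring
    rw [hint] at key
    exact key
  · intro t ht
    have ht0 : 0 < t := lt_of_lt_of_le h2R ht.1
    have hnt : ‖t • u‖ = t := by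
      simp [norm_smul, hnu, abs_of_pos ht0]
    have hRt : R < ‖t • u - 0‖ := by rw [sub_zero, hnt]; linarith [ht.1]
    have := hsc (t • u) 0 hRt
    rw [hgrad0, sub_zero, sub_zero, hnt] at this
    have hin : ⟪gradient U (t • u), t • u⟫_ℝ = t * ⟪gradient U (t • u), u⟫_ℝ :=
      real_inner_smul_right _ _ _
    rw [hin] at this
    have : m * t ≤ ⟪gradient U (t • u), u⟫_ℝ := by
      nlinarith
    rw [← grad_inner]
    exact this

lemma U_lower (U : E → ℝ) (hU : ContDiff ℝ 1 U) {L m R : ℝ}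
    (hL : 0 < L) (hm : 0 < m) (hR : 0 < R)
    (hlip : ∀ a b : E, ‖gradient U a - gradient U b‖ ≤ L * ‖a - b‖)
    (hgrad0 : gradient U 0 = 0)
    (hsc : ∀ a b : E, R < ‖a - b‖ → m * ‖a - b‖ ^ 2 ≤ ⟪gradient U a - gradient U b, a - b⟫_ℝ)
    (x : E) :
    U 0 - 2*L*R^2 - 2*m*R^2 + m / 2 * ‖x‖ ^ 2 ≤ U x := by
  rcases le_or_gt ‖x‖ (2*R) with hcase | hcase
  · have h1 := lip_lower U hU hlip hgrad0 x
    have h2 : ‖x‖ ^ 2 ≤ (2*R)^2 := by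
      have := norm_nonneg x
      nlinarith
    nlinarith
  · set s := ‖x‖ with hs
    have hs0 : 0 < s := lt_trans (by linarith) hcase
    set u : E := s⁻¹ • x with hu
    have hxu : x = s • u := by rw [hu, smul_inv_smul₀ hs0.ne']
    have hnu : ‖u‖ = 1 := by rw [hu, norm_smul]; simp [abs_of_pos hs0, inv_mul_cancel₀ hs0.ne', ← hs]
    have h1 := sc_ray U hU hm hR hsc hgrad0 u hnu (le_of_lt hcase)
    have h2 := lip_lower U hU hlip hgrad0 ((2*R) • u)
    have h3 : ‖(2*R) • u‖ ^ 2 = (2*R)^2 := by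
      rw [norm_smul, hnu, mul_one, Real.norm_eq_abs, abs_of_pos (by linarith : (0:ℝ) < 2*R)]
    rw [h3] at h2
    rw [hxu]
    nlinarith [h1, h2]

lemma integrable_gauss {b : ℝ} (hb : 0 < b) :
    Integrable (fun x : E => Real.exp (-b * ‖x‖ ^ 2)) := by
  have h := (GaussianFourier.integrable_cexp_neg_mul_sq_norm_add
    (V := EuclideanSpace ℝ (Fin d)) (b := (b : ℂ)) (by simpa using hb) 0 (0 : E)).re
  refine h.congr (Filter.Eventually.of_forall fun v => ?_)
  have : (-(b:ℂ) * (‖v‖:ℂ) ^ 2 + 0 * (inner ℝ (0:E) v : ℝ)) = ((-b * ‖v‖^2 : ℝ) : ℂ) := by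
    push_cast; ring
  show (Complex.exp _).re = _
  rw [this, Complex.exp_ofReal_re]

lemma integrable_sq_gauss {b : ℝ} (hb : 0 < b) :
    Integrable (fun x : E => ‖x‖ ^ 2 * Real.exp (-b * ‖x‖ ^ 2)) := by
  have h2 : Integrable (fun x : E => (2/b) * Real.exp (-(b/2) * ‖x‖ ^ 2)) :=
    (integrable_gauss (by linarith)).const_mul _
  refine h2.mono' ?_ (Filter.Eventually.of_forall fun x => ?_)
  · apply Continuous.aestronglyMeasurable
    fun_prop
  · have hx : (0:ℝ) ≤ ‖x‖^2 := sq_nonneg _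
    have key : ‖x‖^2 * Real.exp (-b * ‖x‖^2) ≤ (2/b) * Real.exp (-(b/2) * ‖x‖^2) := by
      have h1 : (b/2) * ‖x‖^2 ≤ Real.exp ((b/2) * ‖x‖^2) := by
        linarith [Real.add_one_le_exp ((b/2) * ‖x‖^2)]
      have h3 : ‖x‖^2 ≤ (2/b) * Real.exp ((b/2) * ‖x‖^2) := by
        rw [div_mul_eq_mul_div, le_div_iff₀ (by linarith : (0:ℝ) < b)]
        nlinarith
      calc ‖x‖^2 * Real.exp (-b * ‖x‖^2)
          ≤ ((2/b) * Real.exp ((b/2) * ‖x‖^2)) * Real.exp (-b * ‖x‖^2) := by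
            apply mul_le_mul_of_nonneg_right h3 (Real.exp_nonneg _)
        _ = (2/b) * Real.exp (-(b/2) * ‖x‖^2) := by
            rw [mul_assoc, ← Real.exp_add]; ring_nf
    rw [Real.norm_eq_abs, abs_of_nonneg (by positivity)]
    exact key

noncomputable def gFn (c : ℝ) (x : EuclideanSpace ℝ (Fin d)) : ℝ :=
  (max (‖x‖ - c) 0) ^ 2 / ‖x‖ ^ 2

noncomputable def dgFn (c : ℝ) (x : EuclideanSpace ℝ (Fin d)) : ℝ :=
  2 * c * (max (‖x‖ - c) 0) / ‖x‖ ^ 2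

noncomputable def AFn (U : EuclideanSpace ℝ (Fin d) → ℝ) (c : ℝ)
    (x : EuclideanSpace ℝ (Fin d)) : ℝ :=
  ((d : ℝ) * gFn c x + dgFn c x - gFn c x * ⟪gradient U x, x⟫_ℝ) * Real.exp (-U x)

lemma gFn_zero {c : ℝ} {x : E} (h : ‖x‖ ≤ c) : gFn c x = 0 := by
  simp [gFn, max_eq_right (by linarith : ‖x‖ - c ≤ 0)]

lemma dgFn_zero {c : ℝ} {x : E} (h : ‖x‖ ≤ c) : dgFn c x = 0 := by
  simp [dgFn, max_eq_right (by linarith : ‖x‖ - c ≤ 0)]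

lemma gFn_nonneg {c : ℝ} (x : E) : 0 ≤ gFn c x :=
  div_nonneg (sq_nonneg _) (sq_nonneg _)

lemma gFn_le_one {c : ℝ} (hc : 0 < c) (x : E) : gFn c x ≤ 1 := by
  rcases le_or_gt ‖x‖ c with h | h
  · rw [gFn_zero h]; norm_num
  · have hx : (0:ℝ) < ‖x‖ := lt_trans hc h
    rw [gFn, div_le_one (by positivity)]
    rw [max_eq_left (by linarith : (0:ℝ) ≤ ‖x‖ - c)]
    nlinarith

lemma dgFn_nonneg {c : ℝ} (hc : 0 ≤ c) (x : E) : 0 ≤ dgFn c x := by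
  exact div_nonneg (mul_nonneg (by linarith) (le_max_right _ _)) (sq_nonneg _)

lemma dgFn_le_two {c : ℝ} (hc : 0 < c) (x : E) : dgFn c x ≤ 2 := by
  rcases le_or_gt ‖x‖ c with h | h
  · rw [dgFn_zero h]; norm_num
  · have hx : (0:ℝ) < ‖x‖ := lt_trans hc h
    rw [dgFn, div_le_iff₀ (by positivity)]
    rw [max_eq_left (by linarith : (0:ℝ) ≤ ‖x‖ - c)]
    nlinarith

lemma div_bound_P2 {c : ℝ} (hc : 0 < c) (hd : 1 ≤ d) (x : E) :
    (d : ℝ) * gFn c x + dgFn c x ≤ (d : ℝ) := by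
  have hd' : (1:ℝ) ≤ (d:ℝ) := by exact_mod_cast hd
  rcases le_or_gt ‖x‖ c with h | h
  · rw [gFn_zero h, dgFn_zero h]; simp
  · have hx : (0:ℝ) < ‖x‖ := lt_trans hc h
    rw [gFn, dgFn, max_eq_left (by linarith : (0:ℝ) ≤ ‖x‖ - c)]
    rw [show (d:ℝ) * ((‖x‖ - c) ^ 2 / ‖x‖ ^ 2) + 2 * c * (‖x‖ - c) / ‖x‖ ^ 2
        = ((d:ℝ) * (‖x‖ - c) ^ 2 + 2 * c * (‖x‖ - c)) / ‖x‖ ^ 2 by ring,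
      div_le_iff₀ (by positivity)]
    nlinarith [mul_nonneg (mul_nonneg (by linarith : (0:ℝ) ≤ (d:ℝ) - 1) hc.le)
      (by linarith : (0:ℝ) ≤ 2*‖x‖ - c), sq_nonneg c]

lemma P1 {c m R : ℝ} (hm : 0 < m) (hR : 0 < R) (hcR : R < c)
    (U : E → ℝ)
    (hsc : ∀ a b : E, R < ‖a - b‖ → m * ‖a - b‖ ^ 2 ≤ ⟪gradient U a - gradient U b, a - b⟫_ℝ)
    (hgrad0 : gradient U 0 = 0) (x : E) :
    m * (max (‖x‖ - c) 0) ^ 2 ≤ gFn c x * ⟪gradient U x, x⟫_ℝ := by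
  rcases le_or_gt ‖x‖ c with h | h
  · rw [gFn_zero h, max_eq_right (by linarith : ‖x‖ - c ≤ 0)]
    norm_num
  · have hx : (0:ℝ) < ‖x‖ := lt_trans (lt_trans hR hcR) h
    have hI : m * ‖x‖ ^ 2 ≤ ⟪gradient U x, x⟫_ℝ := by
      have := hsc x 0 (by rw [sub_zero]; exact lt_trans hcR h)
      rwa [hgrad0, sub_zero, sub_zero] at this
    rw [gFn, max_eq_left (by linarith : (0:ℝ) ≤ ‖x‖ - c)]
    have hg0 : (0:ℝ) ≤ (‖x‖ - c)^2 / ‖x‖^2 := by positivity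
    have key : ((‖x‖ - c)^2 / ‖x‖^2) * (m * ‖x‖^2) ≤ ((‖x‖ - c)^2 / ‖x‖^2) * ⟪gradient U x, x⟫_ℝ :=
      mul_le_mul_of_nonneg_left hI hg0
    have heq : ((‖x‖ - c)^2 / ‖x‖^2) * (m * ‖x‖^2) = m * (‖x‖ - c)^2 := by
      field_simp
    rw [heq] at key
    exact key

-- 1D cutoff derivative
lemma gamma_hasDeriv {c : ℝ} (hc : 0 < c) {t : ℝ} (ht : 0 < t) :
    HasDerivAt (fun s : ℝ => (max (s - c) 0) ^ 2 / s ^ 2)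
      (2 * c * (max (t - c) 0) / t ^ 3) t := by
  rcases lt_trichotomy t c with h | h | h
  · have hev : (fun s : ℝ => (max (s - c) 0) ^ 2 / s ^ 2) =ᶠ[nhds t] (fun _ => 0) := by
      have : Set.Iio c ∈ nhds t := Iio_mem_nhds h
      filter_upwards [this] with s hs
      rw [max_eq_right (by simp at hs; linarith), zero_pow (by norm_num), zero_div]
    rw [max_eq_right (by linarith), mul_zero, zero_div]
    exact (hasDerivAt_const t (0:ℝ)).congr_of_eventuallyEq hev
  · -- t = c : squeeze
    subst h
    rw [max_eq_right (by linarith), mul_zero, zero_div]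
    rw [hasDerivAt_iff_isLittleO]
    rw [isLittleO_iff]
    intro ε hε
    have hball : ∀ᶠ s in nhds t, |s - t| < min (t/2) (ε * t^2 / 4) := by
      have h0 : (0:ℝ) < min (t/2) (ε * t^2/4) := lt_min (by positivity) (by positivity)
      filter_upwards [Metric.ball_mem_nhds t h0] with s hs
      simpa [Real.dist_eq] using hs
    filter_upwards [hball] with s hs
    have hs1 : |s - t| < t/2 := lt_of_lt_of_le hs (min_le_left _ _)
    have hs2 : |s - t| < ε * t^2 / 4 := lt_of_lt_of_le hs (min_le_right _ _)
    have hst : t/2 < s := by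
      have := abs_lt.mp hs1
      linarith [this.1]
    have hnum : (max (s - t) 0)^2 ≤ (s - t)^2 := by
      rcases le_or_gt (s - t) 0 with h' | h'
      · rw [max_eq_right h']; simpa using sq_nonneg (s - t)
      · rw [max_eq_left h'.le]
    have hs0 : (0:ℝ) < s := by linarith [ht]
    have hfs : |(max (s - t) 0)^2 / s^2| ≤ (s-t)^2 / (t/2)^2 := by
      rw [abs_of_nonneg (by positivity)]
      apply div_le_div₀ (by positivity) hnum (by positivity)
      nlinarith
    simp only [smul_zero, sub_zero, sub_self, max_self, ne_eq, OfNat.ofNat_ne_zero,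
      not_false_eq_true, zero_pow, zero_div]
    calc ‖(max (s - t) 0)^2 / s^2‖
        ≤ (s-t)^2/(t/2)^2 := by rw [Real.norm_eq_abs]; exact hfs
      _ = |s-t|^2 * (4 / t^2) := by
          rw [← sq_abs]; field_simp
          try ring
          try tauto
      _ = (|s-t| * |s - t|) * (4 / t^2) := by ring
      _ ≤ (|s-t| * (ε * t^2/4)) * (4/t^2) := by
          apply mul_le_mul_of_nonneg_right (mul_le_mul_of_nonneg_left hs2.le (abs_nonneg _))
          positivity
      _ = ε * |s - t| := by field_simp
      _ = ε * ‖s - t‖ := by rw [Real.norm_eq_abs]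
  · have hev : (fun s : ℝ => (max (s - c) 0) ^ 2 / s ^ 2)
        =ᶠ[nhds t] (fun s => (s - c)^2 / s^2) := by
      filter_upwards [Ioi_mem_nhds h] with s hs
      rw [max_eq_left (by simp at hs; linarith)]
    have hd : HasDerivAt (fun s : ℝ => (s - c)^2 / s^2)
        (2 * c * (t - c) / t^3) t := by
      have h1 : HasDerivAt (fun s : ℝ => (s - c)^2) (2*(t-c)) t := by
        simpa using ((hasDerivAt_id t).sub_const c).fun_pow 2
      have h2 : HasDerivAt (fun s : ℝ => s^2) (2*t) t := by
        simpa using hasDerivAt_pow 2 t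
      have := h1.fun_div h2 (by positivity)
      refine this.congr_deriv ?_
      field_simp
      ring
    rw [max_eq_left (by linarith)]
    exact hd.congr_of_eventuallyEq hev

lemma tendsto_pow_gauss {b : ℝ} (hb : 0 < b) (k : ℕ) :
    Tendsto (fun r : ℝ => r ^ k * Real.exp (-b * r^2)) atTop (nhds 0) := by
  have hF : Tendsto (fun s : ℝ => s ^ k * Real.exp (-s)) atTop (nhds 0) :=
    tendsto_pow_mul_exp_neg_atTop_nhds_zero k
  have hbr : Tendsto (fun r : ℝ => b * r^2) atTop atTop := by
    apply Tendsto.const_mul_atTop hb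
    exact tendsto_pow_atTop (by norm_num)
  have hcomp : Tendsto (fun r : ℝ => (b*r^2)^k * Real.exp (-(b*r^2))) atTop (nhds 0) :=
    hF.comp hbr
  have h2 : Tendsto (fun r : ℝ => (1/b^k) * ((b*r^2)^k * Real.exp (-(b*r^2)))) atTop (nhds 0) := by
    simpa using hcomp.const_mul (1/b^k)
  apply squeeze_zero_norm' _ h2
  filter_upwards [eventually_ge_atTop (1:ℝ)] with r hr
  have hr0 : (0:ℝ) < r := by linarith
  have : (1/b^k) * ((b*r^2)^k * Real.exp (-(b*r^2))) = r^(2*k) * Real.exp (-b*r^2) := by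
    rw [mul_pow, pow_mul]
    field_simp
  rw [this, Real.norm_eq_abs, abs_of_nonneg (by positivity)]
  have : r ^ k ≤ r ^ (2*k) := pow_le_pow_right₀ hr (by omega)
  apply mul_le_mul_of_nonneg_right this (Real.exp_nonneg _)

lemma continuous_gFn {c : ℝ} (hc : 0 < c) : Continuous (gFn (d := d) c) := by
  rw [continuous_iff_continuousAt]
  intro x
  rcases lt_or_ge ‖x‖ c with h | h
  · have hev : gFn (d := d) c =ᶠ[nhds x] (fun _ => 0) := by
      have hopen : IsOpen {y : E | ‖y‖ < c} := isOpen_lt continuous_norm continuous_const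
      filter_upwards [hopen.mem_nhds h] with y hy
      exact gFn_zero (le_of_lt hy)
    exact continuousAt_const.congr hev.symm
  · have hx0 : (0:ℝ) < ‖x‖ := lt_of_lt_of_le hc h
    have : ContinuousAt (fun y : E => (max (‖y‖ - c) 0) ^ 2 / ‖y‖ ^ 2) x := by
      apply ContinuousAt.div (by fun_prop) (by fun_prop)
      positivity
    exact this

lemma continuous_dgFn {c : ℝ} (hc : 0 < c) : Continuous (dgFn (d := d) c) := by
  rw [continuous_iff_continuousAt]
  intro x
  rcases lt_or_ge ‖x‖ c with h | h
  · have hev : dgFn (d := d) c =ᶠ[nhds x] (fun _ => 0) := by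
      have hopen : IsOpen {y : E | ‖y‖ < c} := isOpen_lt continuous_norm continuous_const
      filter_upwards [hopen.mem_nhds h] with y hy
      exact dgFn_zero (le_of_lt hy)
    exact continuousAt_const.congr hev.symm
  · have hx0 : (0:ℝ) < ‖x‖ := lt_of_lt_of_le hc h
    have : ContinuousAt (fun y : E => 2 * c * (max (‖y‖ - c) 0) / ‖y‖ ^ 2) x := by
      apply ContinuousAt.div (by fun_prop) (by fun_prop)
      positivity
    exact this

lemma continuous_gradient (U : E → ℝ) (hU : ContDiff ℝ 1 U) :
    Continuous (fun x : E => gradient U x) := by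
  have h1 : Continuous (fun x : E => fderiv ℝ U x) := hU.continuous_fderiv one_ne_zero
  exact (toDual ℝ (EuclideanSpace ℝ (Fin d))).symm.continuous.comp h1

lemma continuous_AFn (U : E → ℝ) (hU : ContDiff ℝ 1 U) {c : ℝ} (hc : 0 < c) :
    Continuous (AFn U c) := by
  unfold AFn
  have hg := continuous_gFn (d := d) hc
  have hdg := continuous_dgFn (d := d) hc
  have hgrad := continuous_gradient U hU
  have hUc := hU.continuous
  have hinner : Continuous (fun x : E => ⟪gradient U x, x⟫_ℝ) := hgrad.inner continuous_id
  fun_prop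

lemma Phi_hasDeriv {c : ℝ} (hc : 0 < c) (U : E → ℝ) (hU : ContDiff ℝ 1 U)
    (hd : 1 ≤ d) (u : E) (hnu : ‖u‖ = 1) {r : ℝ} (hr : 0 < r) :
    HasDerivAt (fun t : ℝ => t ^ d * (gFn c (t • u) * Real.exp (-U (t • u))))
      (r ^ (d-1) * AFn U c (r • u)) r := by
  obtain ⟨n, rfl⟩ : ∃ n, d = n + 1 := ⟨d - 1, by omega⟩
  have hnorm : ∀ t : ℝ, 0 < t → ‖t • u‖ = t := fun t ht => by
    rw [norm_smul, hnu, mul_one, Real.norm_eq_abs, abs_of_pos ht]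
  have hev : (fun t : ℝ => t ^ (n+1) * (gFn c (t • u) * Real.exp (-U (t • u))))
      =ᶠ[nhds r] (fun t => t ^ (n+1) * ((max (t - c) 0)^2 / t^2 * Real.exp (-U (t • u)))) := by
    filter_upwards [Ioi_mem_nhds hr] with t ht
    rw [Set.mem_Ioi] at ht
    rw [gFn, hnorm t ht]
  have h1 : HasDerivAt (fun t : ℝ => t ^ (n+1)) (((n:ℝ)+1) * r^n) r := by
    simpa using hasDerivAt_pow (n+1) r
  have h2 := gamma_hasDeriv (c := c) hc hr
  have h3 : HasDerivAt (fun t : ℝ => Real.exp (-U (t • u)))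
      (Real.exp (-U (r • u)) * (-(fderiv ℝ U (r • u) u))) r := by
    have := (line_hasDerivAt U hU u r).neg
    simpa [mul_comm] using this.exp
  have htot := h1.fun_mul (h2.fun_mul h3)
  have heq : HasDerivAt (fun t : ℝ => t ^ (n+1) * ((max (t - c) 0)^2 / t^2 * Real.exp (-U (t • u))))
      (r ^ ((n+1)-1) * AFn U c (r • u)) r := by
    refine htot.congr_deriv ?_
    rw [AFn, gFn, dgFn, hnorm r hr, real_inner_smul_right, grad_inner]
    have hrne : r ≠ 0 := hr.ne'
    simp only [Nat.add_sub_cancel, Nat.cast_add, Nat.cast_one]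
    field_simp
    ring
  exact heq.congr_of_eventuallyEq hev

lemma inner_integral_zero {c : ℝ} (hc : 0 < c) (U : E → ℝ) (hU : ContDiff ℝ 1 U)
    (hd : 1 ≤ d) {K b : ℝ} (hb : 0 < b)
    (hbd : ∀ x : E, Real.exp (-U x) ≤ K * Real.exp (-b * ‖x‖^2))
    (u : E) (hnu : ‖u‖ = 1) :
    ∫ t in Set.Ioi (0:ℝ), t ^ (d-1) * AFn U c (t • u) = 0 := by
  by_cases hInt : IntegrableOn (fun t : ℝ => t ^ (d-1) * AFn U c (t • u)) (Set.Ioi 0) volume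
  · have hΦcont : Continuous (fun t : ℝ => t ^ d * (gFn c (t • u) * Real.exp (-U (t • u)))) := by
      have hg := continuous_gFn (d := d) hc
      have hUc := hU.continuous
      fun_prop
    have htend : Tendsto (fun t : ℝ => t ^ d * (gFn c (t • u) * Real.exp (-U (t • u))))
        atTop (nhds 0) := by
      have hK0 : Tendsto (fun t : ℝ => K * (t ^ d * Real.exp (-b * t^2))) atTop (nhds 0) := by
        simpa using (tendsto_pow_gauss hb d).const_mul K
      apply squeeze_zero_norm' _ hK0
      filter_upwards [eventually_gt_atTop (0:ℝ)] with t ht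
      have hnt : ‖t • u‖ = t := by rw [norm_smul, hnu, mul_one, Real.norm_eq_abs, abs_of_pos ht]
      have h1 : 0 ≤ gFn c (t • u) := gFn_nonneg _
      have h2 : gFn c (t • u) ≤ 1 := gFn_le_one hc _
      have h3 := hbd (t • u)
      rw [hnt] at h3
      rw [Real.norm_eq_abs, abs_of_nonneg (mul_nonneg (by positivity)
        (mul_nonneg h1 (Real.exp_nonneg _)))]
      calc t^d * (gFn c (t • u) * Real.exp (-U (t • u)))
          ≤ t^d * (1 * (K * Real.exp (-b*t^2))) := by
            apply mul_le_mul_of_nonneg_left _ (by positivity)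
            exact mul_le_mul h2 h3 (Real.exp_nonneg _) (by norm_num)
        _ = K * (t^d * Real.exp (-b*t^2)) := by ring
    have hkey := integral_Ioi_of_hasDerivAt_of_tendsto
      hΦcont.continuousWithinAt
      (fun t ht => Phi_hasDeriv hc U hU hd u hnu (Set.mem_Ioi.mp ht)) hInt htend
    rw [hkey]
    simp [zero_pow (by omega : d ≠ 0)]
  · exact integral_undef hInt

lemma integral_AFn_zero {c : ℝ} (hc : 0 < c) (U : E → ℝ) (hU : ContDiff ℝ 1 U)
    (hd : 1 ≤ d) {K b : ℝ} (hb : 0 < b)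
    (hbd : ∀ x : E, Real.exp (-U x) ≤ K * Real.exp (-b * ‖x‖^2))
    (hAint : Integrable (AFn U c)) :
    ∫ x : E, AFn U c x = 0 := by
  haveI : Nonempty (Fin d) := ⟨⟨0, by omega⟩⟩
  haveI : Nontrivial (EuclideanSpace ℝ (Fin d)) := inferInstance
  have hdim : Module.finrank ℝ (EuclideanSpace ℝ (Fin d)) = d := finrank_euclideanSpace_fin
  set μ : Measure (EuclideanSpace ℝ (Fin d)) := volume with hμ
  have h0 : MeasurableSet ({0}ᶜ : Set (EuclideanSpace ℝ (Fin d))) :=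
    (measurableSet_singleton 0).compl
  have mp := μ.measurePreserving_homeomorphUnitSphereProd
  rw [hdim] at mp
  set g : Metric.sphere (0 : EuclideanSpace ℝ (Fin d)) 1 × Set.Ioi (0:ℝ) → ℝ :=
    fun y => AFn U c ((y.2 : ℝ) • (y.1 : EuclideanSpace ℝ (Fin d))) with hg
  have hcomp : ∀ x : ({0}ᶜ : Set (EuclideanSpace ℝ (Fin d))),
      g (homeomorphUnitSphereProd (EuclideanSpace ℝ (Fin d)) x) = AFn U c x.1 := by
    intro x
    have hx : (x : EuclideanSpace ℝ (Fin d)) ≠ 0 := x.2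
    simp only [hg, homeomorphUnitSphereProd_apply_fst_coe, homeomorphUnitSphereProd_apply_snd_coe]
    rw [smul_inv_smul₀ (norm_ne_zero_iff.2 hx)]
  have hgint : Integrable g (μ.toSphere.prod (Measure.volumeIoiPow (d - 1))) := by
    rw [← mp.integrable_comp_emb (Homeomorph.measurableEmbedding _)]
    have : (g ∘ (homeomorphUnitSphereProd (EuclideanSpace ℝ (Fin d))))
        = fun x : ({0}ᶜ : Set (EuclideanSpace ℝ (Fin d))) => AFn U c x.1 := funext hcomp
    rw [this]
    have : Integrable (fun x : ({0}ᶜ : Set (EuclideanSpace ℝ (Fin d))) => AFn U c x.1)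
        (μ.comap Subtype.val) := by
      rw [show (fun x : ({0}ᶜ : Set (EuclideanSpace ℝ (Fin d))) => AFn U c x.1)
          = AFn U c ∘ Subtype.val from rfl]
      rw [← (MeasurableEmbedding.subtype_coe h0).integrable_map_iff,
        (MeasurableEmbedding.subtype_coe h0).map_comap, Subtype.range_coe]
      exact hAint.restrict
    exact this
  calc ∫ x, AFn U c x ∂μ = ∫ x in ({0}ᶜ : Set (EuclideanSpace ℝ (Fin d))), AFn U c x ∂μ := by
        rw [restrict_compl_singleton]
    _ = ∫ x : ({0}ᶜ : Set (EuclideanSpace ℝ (Fin d))), AFn U c x.1 ∂(μ.comap Subtype.val) :=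
        (integral_subtype_comap h0 _).symm
    _ = ∫ y, g y ∂(μ.toSphere.prod (Measure.volumeIoiPow (d - 1))) := by
        rw [← mp.integral_comp (Homeomorph.measurableEmbedding _) g]
        exact integral_congr_ae (Filter.Eventually.of_forall fun x => (hcomp x).symm)
    _ = ∫ u, (∫ t : Set.Ioi (0:ℝ), g (u, t) ∂(Measure.volumeIoiPow (d - 1))) ∂μ.toSphere :=
        integral_prod g hgint
    _ = 0 := by
        have hinner : ∀ u : Metric.sphere (0 : EuclideanSpace ℝ (Fin d)) 1,
            (∫ t : Set.Ioi (0:ℝ), g (u, t) ∂(Measure.volumeIoiPow (d - 1))) = 0 := by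
          intro u
          have hnu : ‖(u : EuclideanSpace ℝ (Fin d))‖ = 1 :=
            mem_sphere_zero_iff_norm.mp u.2
          have meas : Measurable fun t : Set.Ioi (0:ℝ) => Real.toNNReal (t.1 ^ (d-1)) :=
            (measurable_subtype_coe.pow_const _).real_toNNReal
          simp only [Measure.volumeIoiPow, ENNReal.ofReal]
          rw [integral_withDensity_eq_integral_smul meas]
          have hstep : ∫ (x : Set.Ioi (0:ℝ)),
              (fun t : ℝ => (t ^ (d-1)).toNNReal • AFn U c (t • (u : EuclideanSpace ℝ (Fin d)))) ↑x
                ∂(Measure.comap Subtype.val volume)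
              = ∫ t in Set.Ioi (0:ℝ),
                  (t ^ (d-1)).toNNReal • AFn U c (t • (u : EuclideanSpace ℝ (Fin d))) :=
            integral_subtype_comap (measurableSet_Ioi (a := (0:ℝ)))
              (fun t : ℝ => (t ^ (d-1)).toNNReal • AFn U c (t • (u : EuclideanSpace ℝ (Fin d))))
          rw [show (fun x : Set.Ioi (0:ℝ) => ((x:ℝ) ^ (d - 1)).toNNReal • g (u, x))
              = (fun x : Set.Ioi (0:ℝ) => (fun t : ℝ =>
                (t ^ (d-1)).toNNReal • AFn U c (t • (u : EuclideanSpace ℝ (Fin d)))) ↑x) from rfl,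
            hstep]
          rw [setIntegral_congr_fun measurableSet_Ioi
            (g := fun t : ℝ => t ^ (d-1) * AFn U c (t • (u : EuclideanSpace ℝ (Fin d))))
            (fun t ht => ?_)]
          · exact inner_integral_zero hc U hU hd hb hbd _ hnu
          · rw [NNReal.smul_def, Real.coe_toNNReal _ (pow_nonneg (le_of_lt ht) _)]
            rfl
        rw [integral_congr_ae (Filter.Eventually.of_forall hinner)]
        simp

set_option maxHeartbeats 1000000 in
/-- Second-moment bound for the invariant measure p*(x) ∝ exp(-U(x)) where U is L-smooth,
∇U(0) = 0, and m-strongly convex outside a ball of radius R: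
E_{x∼p*}[‖x‖²] ≤ 2d/m + 18R². -/
theorem second_moment_bound_pstar {d : ℕ} (L m R Z : ℝ)
    (hL : 0 < L) (hm : 0 < m) (hR : 0 < R)
    (U : EuclideanSpace ℝ (Fin d) → ℝ) (hU : ContDiff ℝ 1 U)
    (hlip : ∀ a b : EuclideanSpace ℝ (Fin d),
      ‖gradient U a - gradient U b‖ ≤ L * ‖a - b‖)
    (hgrad0 : gradient U 0 = 0)
    (hsc : ∀ a b : EuclideanSpace ℝ (Fin d), R < ‖a - b‖ →
      m * ‖a - b‖ ^ 2 ≤ ⟪gradient U a - gradient U b, a - b⟫_ℝ)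
    (hZ : Z = ∫ x : EuclideanSpace ℝ (Fin d), Real.exp (-U x))
    (hZpos : 0 < Z)
    (p : Measure (EuclideanSpace ℝ (Fin d)))
    (hp : p = volume.withDensity fun x => ENNReal.ofReal (Real.exp (-U x) / Z)) :
    ∫ x, ‖x‖ ^ 2 ∂p ≤ 2 * d / m + 18 * R ^ 2 := by
  rcases Nat.eq_zero_or_pos d with hd0 | hdpos
  · subst hd0
    have hz : (fun x : EuclideanSpace ℝ (Fin 0) => ‖x‖ ^ 2) = fun _ => (0:ℝ) := by
      funext x
      rw [Subsingleton.elim x 0]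
      simp
    rw [hz, integral_zero]
    have : (0:ℝ) ≤ 2 * (0:ℕ) / m + 18 * R ^ 2 := by positivity
    simpa using this
  have hd : 1 ≤ d := hdpos
  -- constants
  set c : ℝ := 6/5 * R with hcdef
  have hc : 0 < c := by positivity
  have hcR : R < c := by rw [hcdef]; linarith
  set r0 : ℝ := 21/5 * R with hr0def
  -- lower bound for U and Gaussian domination
  have hlow := U_lower U hU hL hm hR hlip hgrad0 hsc
  set K : ℝ := Real.exp (2*L*R^2 + 2*m*R^2 - U 0) with hKdef
  have hb2 : (0:ℝ) < m/2 := by linarith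
  have hbd : ∀ x : EuclideanSpace ℝ (Fin d), Real.exp (-U x) ≤ K * Real.exp (-(m/2) * ‖x‖^2) := by
    intro x
    rw [hKdef, ← Real.exp_add]
    apply Real.exp_le_exp.2
    have := hlow x
    linarith
  -- integrability
  have hIexp : Integrable (fun x : EuclideanSpace ℝ (Fin d) => Real.exp (-U x)) := by
    apply Integrable.mono' ((integrable_gauss hb2).const_mul K)
      (hU.continuous.neg.rexp.aestronglyMeasurable)
    filter_upwards with x
    rw [Real.norm_eq_abs, abs_of_nonneg (Real.exp_nonneg _)]
    exact hbd x
  have hIsq : Integrable (fun x : EuclideanSpace ℝ (Fin d) => ‖x‖^2 * Real.exp (-U x)) := by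
    apply Integrable.mono' ((integrable_sq_gauss hb2).const_mul K)
      (((continuous_norm.pow 2).mul hU.continuous.neg.rexp).aestronglyMeasurable)
    filter_upwards with x
    show ‖‖x‖^2 * Real.exp (-U x)‖ ≤ _
    rw [Real.norm_eq_abs, abs_of_nonneg (by positivity)]
    calc ‖x‖^2 * Real.exp (-U x) ≤ ‖x‖^2 * (K * Real.exp (-(m/2) * ‖x‖^2)) :=
          mul_le_mul_of_nonneg_left (hbd x) (by positivity)
      _ = K * (‖x‖^2 * Real.exp (-(m/2) * ‖x‖^2)) := by ring
  have hgradbd : ∀ x : EuclideanSpace ℝ (Fin d), |⟪gradient U x, x⟫_ℝ| ≤ L * ‖x‖^2 := by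
    intro x
    calc |⟪gradient U x, x⟫_ℝ| ≤ ‖gradient U x‖ * ‖x‖ := abs_real_inner_le_norm _ _
      _ ≤ (L * ‖x‖) * ‖x‖ := by
          apply mul_le_mul_of_nonneg_right _ (norm_nonneg _)
          have := hlip x 0
          simpa [hgrad0] using this
      _ = L * ‖x‖^2 := by ring
  have hSbd : ∀ x : EuclideanSpace ℝ (Fin d),
      |(d:ℝ) * gFn c x + dgFn c x - gFn c x * ⟪gradient U x, x⟫_ℝ| ≤ (d:ℝ) + 2 + L * ‖x‖^2 := by
    intro x
    have h1 := gFn_nonneg (c := c) x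
    have h2 := gFn_le_one hc x
    have h3 := dgFn_nonneg hc.le x
    have h4 := dgFn_le_two hc x
    have h5 := hgradbd x
    have h6 : |gFn c x * ⟪gradient U x, x⟫_ℝ| ≤ L * ‖x‖^2 := by
      rw [abs_mul, abs_of_nonneg h1]
      calc gFn c x * |⟪gradient U x, x⟫_ℝ| ≤ 1 * |⟪gradient U x, x⟫_ℝ| :=
            mul_le_mul_of_nonneg_right h2 (abs_nonneg _)
        _ ≤ L * ‖x‖^2 := by rw [one_mul]; exact h5
    have h7 := abs_le.mp h6
    have hd0 : (0:ℝ) ≤ (d:ℝ) := Nat.cast_nonneg d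
    rw [abs_le]
    constructor
    · nlinarith
    · nlinarith
  have hIA : Integrable (AFn U c) := by
    apply Integrable.mono'
      ((hIexp.const_mul ((d:ℝ)+2)).add (hIsq.const_mul L))
      ((continuous_AFn U hU hc).aestronglyMeasurable)
    filter_upwards with x
    rw [AFn, Real.norm_eq_abs, abs_mul, abs_of_nonneg (Real.exp_nonneg _)]
    calc |(d:ℝ) * gFn c x + dgFn c x - gFn c x * ⟪gradient U x, x⟫_ℝ| * Real.exp (-U x)
        ≤ ((d:ℝ) + 2 + L * ‖x‖^2) * Real.exp (-U x) :=
          mul_le_mul_of_nonneg_right (hSbd x) (Real.exp_nonneg _)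
      _ = ((d:ℝ)+2) * Real.exp (-U x) + L * (‖x‖^2 * Real.exp (-U x)) := by ring
  -- master identity
  have hA0 : ∫ x : EuclideanSpace ℝ (Fin d), AFn U c x = 0 :=
    integral_AFn_zero hc U hU hd hb2 hbd hIA
  -- split A = B - C
  set B : EuclideanSpace ℝ (Fin d) → ℝ :=
    fun x => ((d:ℝ) * gFn c x + dgFn c x) * Real.exp (-U x) with hBdef
  set C : EuclideanSpace ℝ (Fin d) → ℝ :=
    fun x => (gFn c x * ⟪gradient U x, x⟫_ℝ) * Real.exp (-U x) with hCdef
  have hABC : ∀ x, AFn U c x = B x - C x := by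
    intro x
    rw [AFn, hBdef, hCdef]
    ring
  have hIB : Integrable B := by
    apply Integrable.mono' (hIexp.const_mul ((d:ℝ)+2))
      (by
        have hg := continuous_gFn (d := d) hc
        have hdg := continuous_dgFn (d := d) hc
        have hUc := hU.continuous
        apply Continuous.aestronglyMeasurable
        fun_prop)
    filter_upwards with x
    have h1 := gFn_nonneg (c := c) x
    have h2 := gFn_le_one hc x
    have h3 := dgFn_nonneg hc.le x
    have h4 := dgFn_le_two hc x
    have hd0 : (0:ℝ) ≤ (d:ℝ) := Nat.cast_nonneg d
    simp only [hBdef]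
    rw [Real.norm_eq_abs, abs_mul, abs_of_nonneg (Real.exp_nonneg _),
      abs_of_nonneg (by positivity)]
    apply mul_le_mul_of_nonneg_right _ (Real.exp_nonneg _)
    nlinarith
  have hIC : Integrable C := by
    have : C = fun x => B x - AFn U c x := by
      funext x
      rw [hABC x]; ring
    rw [this]
    exact hIB.sub hIA
  have hBC : ∫ x, C x = ∫ x, B x := by
    have : ∫ x, (B x - C x) = 0 := by
      rw [← integral_congr_ae (Filter.Eventually.of_forall fun x => (hABC x))]
      exact hA0
    rw [integral_sub hIB hIC] at this
    linarith
  -- lower bound for ∫ C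
  set M : EuclideanSpace ℝ (Fin d) → ℝ :=
    fun x => (max (‖x‖ - c) 0)^2 * Real.exp (-U x) with hMdef
  have hMnonneg : ∀ x, 0 ≤ M x := fun x => by
    simp only [hMdef]; positivity
  have hIM : Integrable M := by
    apply Integrable.mono' hIsq
      (by
        have hUc := hU.continuous
        apply Continuous.aestronglyMeasurable
        fun_prop)
    filter_upwards with x
    simp only [hMdef]
    rw [Real.norm_eq_abs, abs_of_nonneg (by positivity)]
    apply mul_le_mul_of_nonneg_right _ (Real.exp_nonneg _)
    have h1 : max (‖x‖ - c) 0 ≤ ‖x‖ := by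
      apply max_le (by linarith [hc]) (norm_nonneg x)
    have h2 : (0:ℝ) ≤ max (‖x‖ - c) 0 := le_max_right _ _
    nlinarith
  have hCge : m * ∫ x, M x ≤ ∫ x, C x := by
    rw [← integral_const_mul]
    apply integral_mono (hIM.const_mul m) hIC
    intro x
    have := P1 hm hR hcR U hsc hgrad0 x
    simp only [hMdef, hCdef]
    calc m * ((max (‖x‖ - c) 0)^2 * Real.exp (-U x))
        = (m * (max (‖x‖ - c) 0)^2) * Real.exp (-U x) := by ring
      _ ≤ (gFn c x * ⟪gradient U x, x⟫_ℝ) * Real.exp (-U x) :=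
          mul_le_mul_of_nonneg_right this (Real.exp_nonneg _)
  -- upper bound for ∫ B
  have hBle : ∫ x, B x ≤ (d:ℝ) * Z := by
    rw [hZ, ← integral_const_mul]
    apply integral_mono hIB (hIexp.const_mul _)
    intro x
    simp only [hBdef]
    exact mul_le_mul_of_nonneg_right (div_bound_P2 hc hd x) (Real.exp_nonneg _)
  have hMle : m * ∫ x, M x ≤ (d:ℝ) * Z := by linarith [hCge, hBC, hBle]
  -- second moment bound
  set s : Set (EuclideanSpace ℝ (Fin d)) := {x | ‖x‖ ≤ r0} with hsdef
  have hsm : MeasurableSet s := measurableSet_le continuous_norm.measurable measurable_const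
  have hsplit : ∫ x, ‖x‖^2 * Real.exp (-U x) =
      (∫ x in s, ‖x‖^2 * Real.exp (-U x)) + ∫ x in sᶜ, ‖x‖^2 * Real.exp (-U x) :=
    (integral_add_compl hsm hIsq).symm
  have h1 : ∫ x in s, ‖x‖^2 * Real.exp (-U x) ≤ r0^2 * Z := by
    have step1 : ∫ x in s, ‖x‖^2 * Real.exp (-U x) ≤ ∫ x in s, r0^2 * Real.exp (-U x) := by
      apply setIntegral_mono_on hIsq.integrableOn ((hIexp.const_mul _).integrableOn) hsm
      intro x hx
      have hx' : ‖x‖ ≤ r0 := hx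
      apply mul_le_mul_of_nonneg_right _ (Real.exp_nonneg _)
      nlinarith [norm_nonneg x]
    have step2 : ∫ x in s, r0^2 * Real.exp (-U x) ≤ r0^2 * Z := by
      rw [integral_const_mul, hZ]
      apply mul_le_mul_of_nonneg_left _ (by positivity)
      apply setIntegral_le_integral hIexp
      filter_upwards with x using Real.exp_nonneg _
    linarith
  have h2 : ∫ x in sᶜ, ‖x‖^2 * Real.exp (-U x) ≤ 2 * ∫ x, M x := by
    have step1 : ∫ x in sᶜ, ‖x‖^2 * Real.exp (-U x) ≤ ∫ x in sᶜ, 2 * M x := by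
      apply setIntegral_mono_on hIsq.integrableOn ((hIM.const_mul _).integrableOn) hsm.compl
      intro x hx
      have hx' : r0 < ‖x‖ := by
        simp only [hsdef, Set.mem_compl_iff, Set.mem_setOf_eq, not_le] at hx
        exact hx
      have hcx : c < ‖x‖ := by rw [hcdef]; rw [hr0def] at hx'; linarith
      simp only [hMdef]
      rw [max_eq_left (by linarith : (0:ℝ) ≤ ‖x‖ - c)]
      have key : ‖x‖^2 ≤ 2 * (‖x‖ - c)^2 := by
        rw [hcdef]; rw [hr0def] at hx'
        nlinarith
      calc ‖x‖^2 * Real.exp (-U x) ≤ (2 * (‖x‖ - c)^2) * Real.exp (-U x) :=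
            mul_le_mul_of_nonneg_right key (Real.exp_nonneg _)
        _ = 2 * ((‖x‖ - c)^2 * Real.exp (-U x)) := by ring
    have step2 : ∫ x in sᶜ, 2 * M x ≤ 2 * ∫ x, M x := by
      rw [integral_const_mul]
      apply mul_le_mul_of_nonneg_left _ (by norm_num)
      apply setIntegral_le_integral hIM
      filter_upwards with x using hMnonneg x
    linarith
  have hT : ∫ x, ‖x‖^2 * Real.exp (-U x) ≤ r0^2 * Z + 2 * ((d:ℝ) * Z) / m := by
    have hMZ : ∫ x, M x ≤ (d:ℝ) * Z / m := by
      rw [le_div_iff₀ hm]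
      linarith [hMle]
    have : 2 * ∫ x, M x ≤ 2 * ((d:ℝ) * Z) / m := by
      rw [mul_div_assoc]
      linarith [hMZ]
    linarith [hsplit, h1, h2]
  -- convert p-integral
  have hmeas : Measurable fun x : EuclideanSpace ℝ (Fin d) =>
      Real.toNNReal (Real.exp (-U x) / Z) :=
    ((hU.continuous.neg.rexp.div_const Z).measurable).real_toNNReal
  have hpint : ∫ x, ‖x‖ ^ 2 ∂p
      = ∫ x : EuclideanSpace ℝ (Fin d), (Real.exp (-U x) / Z) * ‖x‖^2 := by
    rw [hp]
    simp only [ENNReal.ofReal]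
    rw [integral_withDensity_eq_integral_smul hmeas]
    apply integral_congr_ae
    filter_upwards with x
    rw [NNReal.smul_def, Real.coe_toNNReal _ (by positivity)]
    rfl
  have hfin : ∫ x : EuclideanSpace ℝ (Fin d), (Real.exp (-U x) / Z) * ‖x‖^2
      = (1/Z) * ∫ x, ‖x‖^2 * Real.exp (-U x) := by
    rw [← integral_const_mul]
    apply integral_congr_ae
    filter_upwards with x
    ring
  rw [hpint, hfin]
  have hr018 : r0^2 ≤ 18 * R^2 := by
    rw [hr0def]
    nlinarith [sq_nonneg R]
  have hfinal : (1/Z) * ∫ x, ‖x‖^2 * Real.exp (-U x)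
      ≤ (1/Z) * (r0^2 * Z + 2 * ((d:ℝ) * Z) / m) :=
    mul_le_mul_of_nonneg_left hT (by positivity)
  have heq : (1/Z) * (r0^2 * Z + 2 * ((d:ℝ) * Z) / m) = r0^2 + 2 * (d:ℝ) / m := by
    field_simp
  rw [heq] at hfinal
  have : 2 * (d:ℝ) / m ≤ 2 * (d:ℝ) / m := le_rfl
  linarith [hfinal, hr018]
end
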